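/- The Abel transform A h(r) = 2∫_r^∞ h(s)·s/√(s²-r²) ds of a compactly supported continuous h : [0,∞) → ℝ can be inverted: ∫_r^∞ (A h)(s)/(s·√((s/r)²-1)) ds = π·∫_r^∞ h(t) dt for all r > 0; in particular A is injective on compactly supported continuous functions. -/

import Mathlib

open MeasureTheory Real

/-- The Abel transform of `h`. -/
noncomputable def abelTransform (h : ℝ → ℝ) (r : ℝ) : ℝ :=
  2 * ∫ s in Set.Ioi r, h s * s / Real.sqrt (s ^ 2 - r ^ 2)

open Set

noncomputable def abelG (r t s : ℝ) : ℝ :=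
  (2*t)⁻¹ * Real.arcsin (((r^2+t^2)*s^2 - 2*r^2*t^2)/(s^2*(t^2-r^2)))

lemma abelG_deriv {r t : ℝ} (hr : 0 < r) (hrt : r < t) {s : ℝ} (hs : s ∈ Ioo r t) :
    HasDerivAt (abelG r t) (r / (s * Real.sqrt (t^2 - s^2) * Real.sqrt (s^2 - r^2))) s := by
  obtain ⟨hs1, hs2⟩ := hs
  have hs0 : 0 < s := hr.trans hs1
  have ht0 : 0 < t := hs0.trans hs2
  have htr : 0 < t^2 - r^2 := by nlinarith
  have hts : 0 < t^2 - s^2 := by nlinarith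
  have hsr : 0 < s^2 - r^2 := by nlinarith
  have hden : s^2*(t^2-r^2) ≠ 0 := by positivity
  set ψ : ℝ → ℝ := fun s => ((r^2+t^2)*s^2 - 2*r^2*t^2)/(s^2*(t^2-r^2)) with hψ
  have hψd : HasDerivAt ψ (4*r^2*t^2/(s^3*(t^2-r^2))) s := by
    have h1 : HasDerivAt (fun s : ℝ => (r^2+t^2)*s^2 - 2*r^2*t^2) (2*(r^2+t^2)*s) s := by
      have := (((hasDerivAt_pow 2 s)).const_mul (r^2+t^2)).sub_const (2*r^2*t^2)
      refine this.congr_deriv ?_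
      push_cast; ring
    have h2 : HasDerivAt (fun s : ℝ => s^2*(t^2-r^2)) (2*s*(t^2-r^2)) s := by
      have := (hasDerivAt_pow 2 s).mul_const (t^2-r^2)
      refine this.congr_deriv ?_
      push_cast; ring
    have := h1.div h2 hden
    refine this.congr_deriv ?_
    field_simp
    ring
  have hlt1 : ψ s < 1 := by
    rw [hψ]
    simp only
    rw [div_lt_one (by positivity)]
    nlinarith [mul_pos (pow_pos hr 2) hts]
  have hgt1 : -1 < ψ s := by
    rw [hψ]
    simp only
    rw [lt_div_iff₀ (by positivity)]
    nlinarith [mul_pos (pow_pos ht0 2) hsr]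
  have harc := (Real.hasDerivAt_arcsin (ne_of_gt hgt1) (ne_of_lt hlt1)).comp s hψd
  have := harc.const_mul (2*t)⁻¹
  refine this.congr_deriv ?_
  have e1 : Real.sqrt (t^2-s^2) ^ 2 = t^2 - s^2 := Real.sq_sqrt hts.le
  have e2 : Real.sqrt (s^2-r^2) ^ 2 = s^2 - r^2 := Real.sq_sqrt hsr.le
  have hsq : Real.sqrt (1 - ψ s ^ 2)
      = 2*r*t*Real.sqrt (t^2-s^2)*Real.sqrt (s^2-r^2)/(s^2*(t^2-r^2)) := by
    rw [show 1 - ψ s ^ 2 = (2*r*t*Real.sqrt (t^2-s^2)*Real.sqrt (s^2-r^2)/(s^2*(t^2-r^2)))^2 by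
      rw [hψ]
      simp only
      field_simp
      linear_combination (-4*r^2*t^2*Real.sqrt (s^2-r^2)^2) * e1 + (-4*r^2*t^2*(t^2-s^2)) * e2]
    exact Real.sqrt_sq (by positivity)
  rw [hsq]
  have h1 : Real.sqrt (t^2-s^2) ≠ 0 := by positivity
  have h2 : Real.sqrt (s^2-r^2) ≠ 0 := by positivity
  field_simp
  ring

lemma abelK_intble {r t : ℝ} (hr : 0 < r) (hrt : r < t) :
    IntervalIntegrable (fun s => r / (s * Real.sqrt (t^2 - s^2) * Real.sqrt (s^2 - r^2)))
      volume r t := by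
  have ht0 : 0 < t := hr.trans hrt
  set m := (r + t)/2 with hm
  have hrm : r < m := by rw [hm]; linarith
  have hmt : m < t := by rw [hm]; linarith
  have hm0 : 0 < m := hr.trans hrm
  have hmeas : Measurable fun s => r / (s * Real.sqrt (t^2 - s^2) * Real.sqrt (s^2 - r^2)) := by
    fun_prop
  have htm : 0 < t^2 - m^2 := by nlinarith
  have part1 : IntervalIntegrable (fun s => r / (s * Real.sqrt (t^2 - s^2) * Real.sqrt (s^2 - r^2)))
      volume r m := by
    have hg : IntervalIntegrable
        (fun s => (Real.sqrt (t^2-m^2) * Real.sqrt (2*r))⁻¹ * (s - r) ^ (-(1/2) : ℝ))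
        volume r m := by
      have h0 := (intervalIntegral.intervalIntegrable_rpow' (a := 0) (b := m - r)
        (r := (-(1/2) : ℝ)) (by norm_num)).comp_sub_right r
      simp only [zero_add, sub_add_cancel] at h0
      exact h0.const_mul _
    apply hg.mono_fun' hmeas.aestronglyMeasurable
    rw [Filter.EventuallyLE, ae_restrict_iff' measurableSet_uIoc]
    filter_upwards with x hx
    rw [uIoc_of_le hrm.le] at hx
    obtain ⟨hx1, hx2⟩ := hx
    have hx0 : 0 < x := hr.trans hx1
    have hxr : 0 < x - r := by linarith
    have hxt : 0 < t^2 - x^2 := by nlinarith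
    have hxr2 : 0 < x^2 - r^2 := by nlinarith
    have hrp : (x - r) ^ (-(1/2) : ℝ) = (Real.sqrt (x - r))⁻¹ := by
      rw [Real.rpow_neg hxr.le, Real.sqrt_eq_rpow]
    rw [Real.norm_eq_abs, abs_of_nonneg (by positivity), hrp]
    have key : r * (Real.sqrt (t^2-m^2) * Real.sqrt (2*r) * Real.sqrt (x-r))
        ≤ x * Real.sqrt (t^2 - x^2) * Real.sqrt (x^2 - r^2) := by
      have h1 : Real.sqrt (2*r) * Real.sqrt (x-r) ≤ Real.sqrt (x^2 - r^2) := by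
        rw [← Real.sqrt_mul (by positivity)]
        apply Real.sqrt_le_sqrt; nlinarith
      have h2 : Real.sqrt (t^2-m^2) ≤ Real.sqrt (t^2 - x^2) :=
        Real.sqrt_le_sqrt (by nlinarith)
      calc r * (Real.sqrt (t^2-m^2) * Real.sqrt (2*r) * Real.sqrt (x-r))
          = (r * Real.sqrt (t^2-m^2)) * (Real.sqrt (2*r) * Real.sqrt (x-r)) := by ring
        _ ≤ (x * Real.sqrt (t^2-x^2)) * Real.sqrt (x^2-r^2) := by
            apply mul_le_mul (mul_le_mul hx1.le h2 (by positivity) hx0.le) h1 (by positivity)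
              (by positivity)
    calc r / (x * Real.sqrt (t^2 - x^2) * Real.sqrt (x^2 - r^2))
        ≤ r / (r * (Real.sqrt (t^2-m^2) * Real.sqrt (2*r) * Real.sqrt (x-r))) := by
          apply div_le_div_of_nonneg_left hr.le (by positivity) key
      _ = (Real.sqrt (t^2-m^2) * Real.sqrt (2*r))⁻¹ * (Real.sqrt (x-r))⁻¹ := by
          field_simp
  have part2 : IntervalIntegrable (fun s => r / (s * Real.sqrt (t^2 - s^2) * Real.sqrt (s^2 - r^2)))
      volume m t := by
    have hmr2 : 0 < m^2 - r^2 := by nlinarith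
    have hg : IntervalIntegrable
        (fun s => (r / (m * Real.sqrt (t + m) * Real.sqrt (m^2-r^2))) * (t - s) ^ (-(1/2) : ℝ))
        volume m t := by
      have h0 := (intervalIntegral.intervalIntegrable_rpow' (a := 0) (b := t - m)
        (r := (-(1/2) : ℝ)) (by norm_num)).comp_sub_left t
      simp only [sub_zero, sub_sub_cancel] at h0
      exact (h0.symm).const_mul _
    apply hg.mono_fun' hmeas.aestronglyMeasurable
    rw [Filter.EventuallyLE, ae_restrict_iff' measurableSet_uIoc]
    filter_upwards with x hx
    rw [uIoc_of_le hmt.le] at hx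
    obtain ⟨hx1, hx2⟩ := hx
    have hx0 : 0 < x := hm0.trans hx1
    rcases eq_or_lt_of_le hx2 with hxeq | hxlt
    · rw [hxeq]
      have e0 : Real.sqrt (t^2 - t^2) = 0 := by rw [sub_self, Real.sqrt_zero]
      rw [show t - t = 0 by ring, Real.zero_rpow (by norm_num : (-(1/2):ℝ) ≠ 0), e0]
      simp
    · have hxt : 0 < t - x := by linarith
      have hxt2 : 0 < t^2 - x^2 := by nlinarith
      have hxr2 : 0 < x^2 - r^2 := by nlinarith
      have hrp : (t - x) ^ (-(1/2) : ℝ) = (Real.sqrt (t - x))⁻¹ := by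
        rw [Real.rpow_neg hxt.le, Real.sqrt_eq_rpow]
      rw [Real.norm_eq_abs, abs_of_nonneg (by positivity), hrp]
      have key : m * (Real.sqrt (t + m) * Real.sqrt (t - x)) * Real.sqrt (m^2-r^2)
          ≤ x * Real.sqrt (t^2 - x^2) * Real.sqrt (x^2 - r^2) := by
        have h1 : Real.sqrt (t+m) * Real.sqrt (t-x) ≤ Real.sqrt (t^2 - x^2) := by
          rw [← Real.sqrt_mul (by positivity)]
          apply Real.sqrt_le_sqrt; nlinarith
        have h2 : Real.sqrt (m^2-r^2) ≤ Real.sqrt (x^2 - r^2) :=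
          Real.sqrt_le_sqrt (by nlinarith)
        apply mul_le_mul (mul_le_mul hx1.le h1 (by positivity) hx0.le) h2 (by positivity)
          (by positivity)
      calc r / (x * Real.sqrt (t^2 - x^2) * Real.sqrt (x^2 - r^2))
          ≤ r / (m * (Real.sqrt (t + m) * Real.sqrt (t - x)) * Real.sqrt (m^2-r^2)) := by
            apply div_le_div_of_nonneg_left hr.le (by positivity) key
        _ = (r / (m * Real.sqrt (t + m) * Real.sqrt (m^2-r^2))) * (Real.sqrt (t-x))⁻¹ := by
            field_simp
            try ring
            try tauto
  exact part1.trans part2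

lemma abelK_integral {r t : ℝ} (hr : 0 < r) (hrt : r < t) :
    ∫ s in Ioo r t, r / (s * Real.sqrt (t^2 - s^2) * Real.sqrt (s^2 - r^2)) = π / (2*t) := by
  have ht0 : 0 < t := hr.trans hrt
  have htr : (0:ℝ) < t^2 - r^2 := by nlinarith
  have hcont : ContinuousOn (abelG r t) (Set.Icc r t) := by
    unfold abelG
    apply ContinuousOn.mul continuousOn_const
    apply Real.continuous_arcsin.comp_continuousOn
    apply ContinuousOn.div (by fun_prop) (by fun_prop)
    intro x hx
    have hx0 : 0 < x := lt_of_lt_of_le hr hx.1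
    positivity
  have hGa : Filter.Tendsto (abelG r t) (nhdsWithin r (Set.Ioi r)) (nhds (-(π/(4*t)))) := by
    have h1 : ContinuousWithinAt (abelG r t) (Set.Ioo r t) r :=
      (hcont.continuousWithinAt (Set.left_mem_Icc.mpr hrt.le)).mono Set.Ioo_subset_Icc_self
    have h2 := h1.tendsto
    rw [nhdsWithin_Ioo_eq_nhdsGT hrt] at h2
    convert h2 using 2
    unfold abelG
    rw [show ((r^2+t^2)*r^2 - 2*r^2*t^2) = -(r^2*(t^2-r^2)) by ring, neg_div,
      div_self (by positivity), Real.arcsin_neg, Real.arcsin_one]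
    field_simp
    try ring
    try tauto
  have hGb : Filter.Tendsto (abelG r t) (nhdsWithin t (Set.Iio t)) (nhds (π/(4*t))) := by
    have h1 : ContinuousWithinAt (abelG r t) (Set.Ioo r t) t :=
      (hcont.continuousWithinAt (Set.right_mem_Icc.mpr hrt.le)).mono Set.Ioo_subset_Icc_self
    have h2 := h1.tendsto
    rw [nhdsWithin_Ioo_eq_nhdsLT hrt] at h2
    convert h2 using 2
    unfold abelG
    rw [show ((r^2+t^2)*t^2 - 2*r^2*t^2) = t^2*(t^2-r^2) by ring,
      div_self (by positivity), Real.arcsin_one]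
    field_simp
    try ring
    try tauto
  have hfin := intervalIntegral.integral_eq_sub_of_hasDerivAt_of_tendsto hrt
    (fun x hx => abelG_deriv hr hrt hx) (abelK_intble hr hrt) hGa hGb
  rw [intervalIntegral.integral_of_le hrt.le, MeasureTheory.integral_Ioc_eq_integral_Ioo] at hfin
  rw [hfin]
  field_simp
  ring

lemma abel_slice {r t : ℝ} (hr : 0 < r) (hrt : r < t) (c : ℝ) :
    IntegrableOn (fun s => c * t / Real.sqrt (t^2 - s^2) / (s * Real.sqrt ((s/r)^2 - 1)))
      (Set.Ioi r) volume ∧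
    (∫ s in Set.Ioi r, c * t / Real.sqrt (t^2 - s^2) / (s * Real.sqrt ((s/r)^2 - 1)))
      = π/2 * c := by
  have ht0 : 0 < t := hr.trans hrt
  have heq : ∀ s ∈ Ioo r t, c * t / Real.sqrt (t^2 - s^2) / (s * Real.sqrt ((s/r)^2 - 1))
      = (c*t) * (r / (s * Real.sqrt (t^2 - s^2) * Real.sqrt (s^2 - r^2))) := by
    intro s hs
    obtain ⟨hs1, hs2⟩ := hs
    have hs0 : 0 < s := hr.trans hs1
    have hts : 0 < t^2 - s^2 := by nlinarith
    have hsr : 0 < s^2 - r^2 := by nlinarith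
    have hB : Real.sqrt ((s/r)^2 - 1) = Real.sqrt (s^2 - r^2) / r := by
      rw [show (s/r)^2 - 1 = (s^2-r^2)/r^2 by field_simp,
        Real.sqrt_div hsr.le, Real.sqrt_sq hr.le]
    rw [hB]
    have h1 : Real.sqrt (t^2-s^2) ≠ 0 := by positivity
    have h2 : Real.sqrt (s^2-r^2) ≠ 0 := by positivity
    field_simp
    try ring
    try tauto
  have hind : ∀ s ∈ Set.Ioi r, c * t / Real.sqrt (t^2 - s^2) / (s * Real.sqrt ((s/r)^2 - 1))
      = Set.indicator (Ioo r t)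
        (fun s => c * t / Real.sqrt (t^2 - s^2) / (s * Real.sqrt ((s/r)^2 - 1))) s := by
    intro s hs
    rcases lt_or_ge s t with hst | hst
    · rw [Set.indicator_of_mem (Set.mem_Ioo.mpr ⟨hs, hst⟩)]
    · rw [Set.indicator_of_notMem (by simp [hst.not_gt])]
      have hs0 : 0 < s := hr.trans hs
      have hle : t^2 - s^2 ≤ 0 := by nlinarith
      rw [Real.sqrt_eq_zero_of_nonpos hle, div_zero, zero_div]
  have hker : IntegrableOn (fun s => r / (s * Real.sqrt (t^2 - s^2) * Real.sqrt (s^2 - r^2)))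
      (Ioo r t) volume := by
    rw [← intervalIntegrable_iff_integrableOn_Ioo_of_le hrt.le]
    exact abelK_intble hr hrt
  have hIoo : IntegrableOn (fun s => c * t / Real.sqrt (t^2 - s^2) / (s * Real.sqrt ((s/r)^2 - 1)))
      (Ioo r t) volume :=
    (IntegrableOn.congr_fun (hker.const_mul (c*t)) (fun s hs => (heq s hs).symm) measurableSet_Ioo)
  have hIoi : IntegrableOn (fun s => c * t / Real.sqrt (t^2 - s^2) / (s * Real.sqrt ((s/r)^2 - 1)))
      (Set.Ioi r) volume := by
    have hi : IntegrableOn (Set.indicator (Ioo r t)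
        (fun s => c * t / Real.sqrt (t^2 - s^2) / (s * Real.sqrt ((s/r)^2 - 1))))
        (Set.Ioi r) volume := by
      unfold IntegrableOn
      rw [integrable_indicator_iff measurableSet_Ioo]
      unfold IntegrableOn
      rw [Measure.restrict_restrict measurableSet_Ioo,
        Set.inter_eq_self_of_subset_left Set.Ioo_subset_Ioi_self]
      exact hIoo
    exact hi.congr_fun (fun s hs => (hind s hs).symm) measurableSet_Ioi
  refine ⟨hIoi, ?_⟩
  rw [setIntegral_congr_fun measurableSet_Ioi hind,
    setIntegral_indicator measurableSet_Ioo,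
    Set.inter_eq_self_of_subset_right Set.Ioo_subset_Ioi_self,
    setIntegral_congr_fun measurableSet_Ioo heq,
    MeasureTheory.integral_const_mul, abelK_integral hr hrt]
  field_simp

lemma abel_main (h : ℝ → ℝ) (hc : Continuous h) (hsupp : HasCompactSupport h)
    {r : ℝ} (hr : 0 < r) :
    ∫ s in Set.Ioi r, abelTransform h s / (s * Real.sqrt ((s / r) ^ 2 - 1))
      = π * ∫ t in Set.Ioi r, h t := by
  have hm : Measurable h := hc.measurable
  have hmeas : AEStronglyMeasurable
      (Function.uncurry fun s t => h t * t / Real.sqrt (t^2 - s^2) / (s * Real.sqrt ((s/r)^2 - 1)))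
      ((volume.restrict (Set.Ioi r)).prod (volume.restrict (Set.Ioi r))) := by
    apply Measurable.aestronglyMeasurable
    show Measurable fun p : ℝ × ℝ => h p.2 * p.2 / Real.sqrt (p.2^2 - p.1^2) / (p.1 * Real.sqrt ((p.1/r)^2 - 1))
    fun_prop
  have hslice : ∀ t ∈ Set.Ioi r, IntegrableOn
      (fun s => h t * t / Real.sqrt (t^2 - s^2) / (s * Real.sqrt ((s/r)^2 - 1)))
      (Set.Ioi r) volume :=
    fun t ht => (abel_slice hr ht (h t)).1
  have hnorm : ∀ t ∈ Set.Ioi r,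
      (∫ s in Set.Ioi r, ‖h t * t / Real.sqrt (t^2 - s^2) / (s * Real.sqrt ((s/r)^2 - 1))‖)
        = π/2 * ‖h t‖ := by
    intro t ht
    have ht0 : 0 < t := hr.trans ht
    rw [setIntegral_congr_fun measurableSet_Ioi
      (g := fun s => ‖h t‖ * t / Real.sqrt (t^2 - s^2) / (s * Real.sqrt ((s/r)^2 - 1)))
      (fun s hs => by
        have hs0 : 0 < s := hr.trans hs
        rw [Real.norm_eq_abs, Real.norm_eq_abs, abs_div, abs_div, abs_mul,
          abs_of_nonneg ht0.le, abs_of_nonneg (Real.sqrt_nonneg _),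
          abs_of_nonneg (by positivity : (0:ℝ) ≤ s * Real.sqrt ((s/r)^2-1))])]
    exact (abel_slice hr ht ‖h t‖).2
  have hprod : Integrable
      (Function.uncurry fun s t => h t * t / Real.sqrt (t^2 - s^2) / (s * Real.sqrt ((s/r)^2 - 1)))
      ((volume.restrict (Set.Ioi r)).prod (volume.restrict (Set.Ioi r))) := by
    rw [integrable_prod_iff' hmeas]
    constructor
    · rw [ae_restrict_iff' measurableSet_Ioi]
      exact ae_of_all _ hslice
    · have hi : Integrable (fun t => π/2 * ‖h t‖) (volume.restrict (Set.Ioi r)) :=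
        ((hc.norm.integrable_of_hasCompactSupport hsupp.norm).integrableOn).const_mul _
      apply hi.congr
      rw [Filter.EventuallyEq, ae_restrict_iff' measurableSet_Ioi]
      exact ae_of_all _ (fun t ht => (hnorm t ht).symm)
  have hswap := MeasureTheory.integral_integral_swap hprod
  have hLHS : ∀ s ∈ Set.Ioi r, abelTransform h s / (s * Real.sqrt ((s/r)^2 - 1))
      = 2 * ∫ t in Set.Ioi r, h t * t / Real.sqrt (t^2 - s^2) / (s * Real.sqrt ((s/r)^2 - 1)) := by
    intro s hs
    have hs0 : 0 < s := hr.trans hs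
    have hdom : (∫ t in Set.Ioi r, h t * t / Real.sqrt (t^2 - s^2))
        = ∫ t in Set.Ioi s, h t * t / Real.sqrt (t^2 - s^2) := by
      rw [setIntegral_congr_fun measurableSet_Ioi
        (g := Set.indicator (Set.Ioi s) fun t => h t * t / Real.sqrt (t^2-s^2))
        (fun t ht => by
          rcases lt_or_ge s t with h1 | h1
          · rw [Set.indicator_of_mem (show t ∈ Set.Ioi s from h1)]
          · rw [Set.indicator_of_notMem (by simpa using h1.not_gt)]
            have ht0 : 0 < t := hr.trans ht
            rw [Real.sqrt_eq_zero_of_nonpos (by nlinarith), div_zero]),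
        setIntegral_indicator measurableSet_Ioi, Set.Ioi_inter_Ioi,
        max_eq_right (le_of_lt hs)]
    rw [MeasureTheory.integral_div, hdom, abelTransform, mul_div_assoc]
  calc ∫ s in Set.Ioi r, abelTransform h s / (s * Real.sqrt ((s / r) ^ 2 - 1))
      = ∫ s in Set.Ioi r, 2 * ∫ t in Set.Ioi r,
          h t * t / Real.sqrt (t^2 - s^2) / (s * Real.sqrt ((s/r)^2 - 1)) :=
        setIntegral_congr_fun measurableSet_Ioi hLHS
    _ = 2 * ∫ s in Set.Ioi r, ∫ t in Set.Ioi r,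
          h t * t / Real.sqrt (t^2 - s^2) / (s * Real.sqrt ((s/r)^2 - 1)) :=
        MeasureTheory.integral_const_mul 2 _
    _ = 2 * ∫ t in Set.Ioi r, ∫ s in Set.Ioi r,
          h t * t / Real.sqrt (t^2 - s^2) / (s * Real.sqrt ((s/r)^2 - 1)) := by rw [hswap]
    _ = 2 * ∫ t in Set.Ioi r, π/2 * h t := by
        rw [setIntegral_congr_fun measurableSet_Ioi
          (fun t ht => (abel_slice hr ht (h t)).2)]
    _ = 2 * (π/2 * ∫ t in Set.Ioi r, h t) := by rw [MeasureTheory.integral_const_mul]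
    _ = π * ∫ t in Set.Ioi r, h t := by ring

theorem abel_inversion (h : ℝ → ℝ) (hc : Continuous h)
    (hsupp : HasCompactSupport h) (hneg : ∀ s < (0 : ℝ), h s = 0) :
    (∀ r > (0 : ℝ),
      ∫ s in Set.Ioi r, abelTransform h s / (s * Real.sqrt ((s / r) ^ 2 - 1))
        = π * ∫ t in Set.Ioi r, h t) ∧
    ((∀ r > (0 : ℝ), abelTransform h r = 0) → ∀ s, 0 ≤ s → h s = 0) := by
  have hpart1 : ∀ r > (0:ℝ), ∫ s in Set.Ioi r,
      abelTransform h s / (s * Real.sqrt ((s / r) ^ 2 - 1)) = π * ∫ t in Set.Ioi r, h t :=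
    fun r hr => abel_main h hc hsupp hr
  refine ⟨hpart1, ?_⟩
  intro hz
  have hint0 : ∀ r > (0:ℝ), (∫ t in Set.Ioi r, h t) = 0 := by
    intro r hr
    have h1 := hpart1 r hr
    rw [setIntegral_congr_fun measurableSet_Ioi (g := fun _ => (0:ℝ))
      (fun s hs => by rw [hz s (hr.trans hs)]; simp), MeasureTheory.integral_zero] at h1
    rcases mul_eq_zero.mp h1.symm with h2 | h2
    · exact absurd h2 Real.pi_ne_zero
    · exact h2
  have hInt : Integrable h volume := hc.integrable_of_hasCompactSupport hsupp
  have hpos : ∀ t > (0:ℝ), h t = 0 := by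
    intro t0 ht0
    have ha : (0:ℝ) < t0/2 := by linarith
    have hgz : ∀ x ∈ Set.Ioi (t0/2), (∫ u in (t0/2)..x, h u) = 0 := by
      intro x hx
      have hx' : t0/2 < x := hx
      have hx0 : 0 < x := lt_trans ha hx'
      rw [intervalIntegral.integral_of_le (le_of_lt hx')]
      have hsplit : (∫ t in Set.Ioi (t0/2), h t)
          = (∫ t in Set.Ioc (t0/2) x, h t) + ∫ t in Set.Ioi x, h t := by
        rw [← MeasureTheory.setIntegral_union (Set.Ioc_disjoint_Ioi le_rfl)
          measurableSet_Ioi hInt.integrableOn hInt.integrableOn,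
          Set.Ioc_union_Ioi_eq_Ioi hx'.le]
      have e1 := hint0 (t0/2) ha
      have e2 := hint0 x hx0
      rw [e1, e2] at hsplit
      linarith
    have hd1 : HasDerivAt (fun x => ∫ u in (t0/2)..x, h u) (h t0) t0 :=
      intervalIntegral.integral_hasDerivAt_right hInt.intervalIntegrable
        hc.stronglyMeasurable.stronglyMeasurableAtFilter hc.continuousAt
    have hev : (fun x => ∫ u in (t0/2)..x, h u) =ᶠ[nhds t0] (fun _ => (0:ℝ)) :=
      Filter.eventually_of_mem (Ioi_mem_nhds (by linarith : t0/2 < t0)) hgz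
    have hd2 : HasDerivAt (fun _ => (0:ℝ)) (h t0) t0 := hd1.congr_of_eventuallyEq hev.symm
    exact (hd2.unique (hasDerivAt_const t0 0))
  intro s hs
  rcases eq_or_lt_of_le hs with hs0 | hs0
  · have ht : Filter.Tendsto h (nhdsWithin 0 (Set.Ioi 0)) (nhds (h 0)) :=
      (hc.tendsto 0).mono_left nhdsWithin_le_nhds
    have ht2 : Filter.Tendsto h (nhdsWithin 0 (Set.Ioi 0)) (nhds 0) := by
      apply Filter.Tendsto.congr' _ tendsto_const_nhds
      filter_upwards [self_mem_nhdsWithin] with x hx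
      exact (hpos x hx).symm
    rw [← hs0]
    exact tendsto_nhds_unique ht ht2
  · exact hpos s hs0
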